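/- Let T be an isotropic centered real Gaussian field on a compact connected Abelian group G and let a_π = ∫_G T(g) χ_π(g⁻¹) dg. If π, σ ∈ Ĝ satisfy π ∉ {σ, σ⁻¹}, then E[a_π · conj(a_σ)] = 0 and E[a_π · a_σ] = 0. -/

import Mathlib

open MeasureTheory ProbabilityTheory Complex

/-- If a function transforms by a fixed scalar `a ≠ 1` under translation by some `h`,
then its integral with respect to a left-invariant measure vanishes. -/
private lemma char_integral_zero {G : Type*} [Group G] [MeasurableSpace G]
    [TopologicalSpace G] [IsTopologicalGroup G] [BorelSpace G]
    (μ : Measure G) [μ.IsMulLeftInvariant] (f : G → ℂ) (h : G) (a : ℂ) (ha : a ≠ 1)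
    (hf : ∀ g, f (h * g) = a * f g) : ∫ g, f g ∂μ = 0 := by
  have h1 : ∫ g, f (h * g) ∂μ = ∫ g, f g ∂μ := integral_mul_left_eq_self f h
  simp_rw [hf, integral_const_mul] at h1
  by_contra hI
  exact ha (mul_right_cancel₀ hI (h1.trans (one_mul _).symm))

/-- For an isotropic centered Gaussian field `T` on a compact connected
Abelian group `G` with Fourier coefficients `a_π = ∫ T(g) χ_π(g⁻¹) dg`, if
`π ∉ {σ, σ⁻¹}` then `E[a_π ⬝ conj(a_σ)] = 0` and `E[a_π ⬝ a_σ] = 0`. -/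
theorem fourier_coeff_orthogonal
    {G : Type*} [CommGroup G] [TopologicalSpace G] [IsTopologicalGroup G]
    [CompactSpace G] [ConnectedSpace G] [SecondCountableTopology G]
    [MeasurableSpace G] [BorelSpace G]
    (μG : Measure G) [μG.IsHaarMeasure] [IsProbabilityMeasure μG]
    {Ω : Type*} [MeasurableSpace Ω] (P : Measure Ω) [IsProbabilityMeasure P]
    (T : G → Ω → ℝ)
    (hmeas : Measurable (Function.uncurry T))
    (hL2 : MemLp (fun p : G × Ω => T p.1 p.2) 2 (μG.prod P))
    (hcent : ∀ g, ∫ ω, T g ω ∂P = 0)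
    (hGauss : ∀ (n : ℕ) (g : Fin n → G) (c : Fin n → ℝ),
      ∃ m v, P.map (fun ω => ∑ i, c i * T (g i) ω) = gaussianReal m v)
    (hiso : ∀ (h : G) (n : ℕ) (g : Fin n → G),
      P.map (fun ω i => T (h * g i) ω) = P.map (fun ω (i : Fin n) => T (g i) ω))
    (π σ : PontryaginDual G) (hne : π ≠ σ) (hne' : π ≠ σ⁻¹) :
    (∫ ω, (∫ g, (T g ω : ℂ) * ((π g⁻¹ : Circle) : ℂ) ∂μG)
        * starRingEnd ℂ (∫ g, (T g ω : ℂ) * ((σ g⁻¹ : Circle) : ℂ) ∂μG) ∂P) = 0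
    ∧ (∫ ω, (∫ g, (T g ω : ℂ) * ((π g⁻¹ : Circle) : ℂ) ∂μG)
        * (∫ g, (T g ω : ℂ) * ((σ g⁻¹ : Circle) : ℂ) ∂μG) ∂P) = 0 := by
  classical
  have hTm : ∀ g : G, Measurable (T g) := fun g => hmeas.comp measurable_prodMk_left
  -- the covariance kernel
  set K : G → G → ℝ := fun g h => ∫ ω, T g ω * T h ω ∂P with hKdef
  have hK : ∀ g h : G, K g h = K 1 (g⁻¹ * h) := by
    intro g h
    have hmap := hiso g⁻¹ 2 ![g, h]
    have hφ1 : Measurable fun ω (i : Fin 2) => T (![g, h] i) ω :=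
      measurable_pi_lambda _ fun i => hTm _
    have hφ2 : Measurable fun ω (i : Fin 2) => T (g⁻¹ * ![g, h] i) ω :=
      measurable_pi_lambda _ fun i => hTm _
    have hfm : Measurable fun v : Fin 2 → ℝ => v 0 * v 1 :=
      (measurable_pi_apply 0).mul (measurable_pi_apply 1)
    have e1 : ∫ v, (fun v : Fin 2 → ℝ => v 0 * v 1) v
          ∂(P.map fun ω (i : Fin 2) => T (![g, h] i) ω) = ∫ ω, T g ω * T h ω ∂P := by
      rw [integral_map hφ1.aemeasurable hfm.aestronglyMeasurable]
      simp
    have e2 : ∫ v, (fun v : Fin 2 → ℝ => v 0 * v 1) v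
          ∂(P.map fun ω (i : Fin 2) => T (g⁻¹ * ![g, h] i) ω)
        = ∫ ω, T (g⁻¹ * g) ω * T (g⁻¹ * h) ω ∂P := by
      rw [integral_map hφ2.aemeasurable hfm.aestronglyMeasurable]
      simp
    have : ∫ ω, T g ω * T h ω ∂P = ∫ ω, T (g⁻¹ * g) ω * T (g⁻¹ * h) ω ∂P := by
      rw [← e1, ← e2, hmap]
    simpa [hKdef, inv_mul_cancel] using this
  -- the key computation, for a general (unbundled) character `c`
  have key : ∀ c : G → Circle, (Continuous fun g => ((c g : Circle) : ℂ)) →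
      (∀ x y : G, c (x * y) = c x * c y) → (∃ h0 : G, c h0 ≠ π h0) →
      (∫ ω, (∫ g, (T g ω : ℂ) * ((π g⁻¹ : Circle) : ℂ) ∂μG)
        * (∫ h, (T h ω : ℂ) * ((c h : Circle) : ℂ) ∂μG) ∂P) = 0 := by
    intro c hccont hcmul hcex
    obtain ⟨h0, hh0⟩ := hcex
    set ν : Measure (G × G) := μG.prod μG with hνdef
    set pπ : G → ℂ := fun g => ((π g⁻¹ : Circle) : ℂ) with hpπdef
    set cc : G → ℂ := fun g => ((c g : Circle) : ℂ) with hccdef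
    have hpπcont : Continuous pπ :=
      continuous_subtype_val.comp ((map_continuous π).comp continuous_inv)
    set Φ : Ω × (G × G) → ℂ :=
      fun q => ((T q.2.1 q.1 : ℂ) * pπ q.2.1) * ((T q.2.2 q.1 : ℂ) * cc q.2.2) with hΦdef
    -- measure-preserving projections
    have m1 : MeasurePreserving (fun q : Ω × (G × G) => (q.2.1, q.1)) (P.prod ν) (μG.prod P) := by
      refine ⟨(measurable_fst.comp measurable_snd).prodMk measurable_fst, ?_⟩
      have heq : (fun q : Ω × (G × G) => (q.2.1, q.1))
          = Prod.swap ∘ Prod.map id Prod.fst := rfl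
      rw [heq, ← Measure.map_map measurable_swap (measurable_id.prodMap measurable_fst),
        ← Measure.map_prod_map _ _ measurable_id measurable_fst]
      simp [hνdef, Measure.map_id, Measure.map_fst_prod, Measure.prod_swap]
    have m2 : MeasurePreserving (fun q : Ω × (G × G) => (q.2.2, q.1)) (P.prod ν) (μG.prod P) := by
      refine ⟨(measurable_snd.comp measurable_snd).prodMk measurable_fst, ?_⟩
      have heq : (fun q : Ω × (G × G) => (q.2.2, q.1))
          = Prod.swap ∘ Prod.map id Prod.snd := rfl
      rw [heq, ← Measure.map_map measurable_swap (measurable_id.prodMap measurable_snd),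
        ← Measure.map_prod_map _ _ measurable_id measurable_snd]
      simp [hνdef, Measure.map_id, Measure.map_snd_prod, Measure.prod_swap]
    have hmem1 : MemLp (fun q : Ω × (G × G) => T q.2.1 q.1) 2 (P.prod ν) :=
      hL2.comp_measurePreserving m1
    have hmem2 : MemLp (fun q : Ω × (G × G) => T q.2.2 q.1) 2 (P.prod ν) :=
      hL2.comp_measurePreserving m2
    have hWint : Integrable (fun q : Ω × (G × G) => T q.2.1 q.1 * T q.2.2 q.1) (P.prod ν) := by
      have := (hmem2.smul hmem1
        (p := 2) (q := 2) (r := 1) :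
        MemLp ((fun q : Ω × (G × G) => T q.2.1 q.1) • fun q : Ω × (G × G) => T q.2.2 q.1)
          1 (P.prod ν))
      exact memLp_one_iff_integrable.mp this
    have hΦeq : Φ = fun q : Ω × (G × G) =>
        (pπ q.2.1 * cc q.2.2) * ((T q.2.1 q.1 * T q.2.2 q.1 : ℝ) : ℂ) := by
      funext q
      simp only [hΦdef]
      push_cast
      ring
    have hΦint : Integrable Φ (P.prod ν) := by
      rw [hΦeq]
      refine Integrable.bdd_mul (c := 1) hWint.ofReal ?_ (Filter.Eventually.of_forall fun q => ?_)
      · exact ((hpπcont.measurable.comp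
          (measurable_fst.comp measurable_snd)).mul
          (hccont.measurable.comp (measurable_snd.comp measurable_snd))).aestronglyMeasurable
      · simp [hpπdef, hccdef, norm_mul, Circle.norm_coe]
    -- pointwise identity for the inner (probability) integral
    have step3 : ∀ p : G × G, ∫ ω, Φ (ω, p) ∂P = (pπ p.1 * cc p.2) * ((K p.1 p.2 : ℝ) : ℂ) := by
      intro p
      have : (fun ω => Φ (ω, p))
          = fun ω => (pπ p.1 * cc p.2) * ((T p.1 ω * T p.2 ω : ℝ) : ℂ) := by
        funext ω; simp only [hΦdef]; push_cast; ring
      rw [this, integral_const_mul]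
      congr 1
      exact integral_ofReal
    -- the function of `p` after integrating out `ω`
    have hFint : Integrable
        (fun p : G × G => (pπ p.1 * cc p.2) * ((K 1 (p.1⁻¹ * p.2) : ℝ) : ℂ)) ν := by
      have h1 := hΦint.integral_prod_right
      have : (fun p : G × G => ∫ ω, Φ (ω, p) ∂P)
          = fun p : G × G => (pπ p.1 * cc p.2) * ((K 1 (p.1⁻¹ * p.2) : ℝ) : ℂ) := by
        funext p; rw [step3 p, hK p.1 p.2]
      rwa [this] at h1
    set C : ℂ := ∫ u, cc u * ((K 1 u : ℝ) : ℂ) ∂μG with hCdef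
    have step7 : ∀ g : G, ∫ h, (pπ g * cc h) * ((K 1 (g⁻¹ * h) : ℝ) : ℂ) ∂μG
        = pπ g * cc g * C := by
      intro g
      calc ∫ h, (pπ g * cc h) * ((K 1 (g⁻¹ * h) : ℝ) : ℂ) ∂μG
          = ∫ h, (pπ g * cc (g * h)) * ((K 1 (g⁻¹ * (g * h)) : ℝ) : ℂ) ∂μG :=
            (integral_mul_left_eq_self
              (fun h => (pπ g * cc h) * ((K 1 (g⁻¹ * h) : ℝ) : ℂ)) g).symm
        _ = ∫ h, (pπ g * cc g) * (cc h * ((K 1 h : ℝ) : ℂ)) ∂μG := by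
            congr 1; funext h
            simp only [hccdef, inv_mul_cancel_left, hcmul g h, Circle.coe_mul]
            ring
        _ = pπ g * cc g * C := by rw [integral_const_mul, hCdef]
    have step9 : ∫ g, pπ g * cc g ∂μG = 0 := by
      refine char_integral_zero μG (fun g => pπ g * cc g) h0 (pπ h0 * cc h0) ?_ ?_
      · intro heq
        apply hh0
        have : ((((π h0⁻¹) * c h0 : Circle)) : ℂ) = ((1 : Circle) : ℂ) := by
          simpa [hpπdef, hccdef] using heq
        have h2 : (π h0⁻¹) * c h0 = 1 := Circle.coe_injective this
        have h3 : (π h0)⁻¹ = (c h0)⁻¹ := by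
          rw [← map_inv π]; exact eq_inv_of_mul_eq_one_left h2
        exact (inv_injective h3).symm
      · intro g
        simp only [hpπdef, hccdef, mul_inv, map_mul, hcmul h0 g, Circle.coe_mul]
        ring
    -- now put everything together
    calc (∫ ω, (∫ g, (T g ω : ℂ) * ((π g⁻¹ : Circle) : ℂ) ∂μG)
            * (∫ h, (T h ω : ℂ) * ((c h : Circle) : ℂ) ∂μG) ∂P)
        = ∫ ω, ∫ p, Φ (ω, p) ∂ν ∂P := by
          congr 1; funext ω
          exact (integral_prod_mul (μ := μG) (ν := μG)
            (fun g => (T g ω : ℂ) * pπ g) (fun h => (T h ω : ℂ) * cc h)).symm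
      _ = ∫ p, ∫ ω, Φ (ω, p) ∂P ∂ν :=
          integral_integral_swap (f := fun ω p => Φ (ω, p)) hΦint
      _ = ∫ p : G × G, (pπ p.1 * cc p.2) * ((K 1 (p.1⁻¹ * p.2) : ℝ) : ℂ) ∂ν := by
          congr 1; funext p; rw [step3 p, hK p.1 p.2]
      _ = ∫ g, ∫ h, (pπ g * cc h) * ((K 1 (g⁻¹ * h) : ℝ) : ℂ) ∂μG ∂μG :=
          integral_prod _ hFint
      _ = ∫ g, pπ g * cc g * C ∂μG := by congr 1; funext g; exact step7 g
      _ = (∫ g, pπ g * cc g ∂μG) * C := integral_mul_const C _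
      _ = 0 := by rw [step9, zero_mul]
  constructor
  · -- conjugated case : `c = σ`
    have hex : ∃ h0 : G, σ h0 ≠ π h0 := by
      by_contra hcon
      push_neg at hcon
      exact hne (DFunLike.ext π σ fun x => (hcon x).symm)
    have hconj : ∀ ω, starRingEnd ℂ (∫ g, (T g ω : ℂ) * ((σ g⁻¹ : Circle) : ℂ) ∂μG)
        = ∫ h, (T h ω : ℂ) * ((σ h : Circle) : ℂ) ∂μG := by
      intro ω
      rw [← integral_conj]
      congr 1; funext h
      rw [map_mul, Complex.conj_ofReal, ← Circle.coe_inv_eq_conj, ← map_inv σ, inv_inv]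
    simp_rw [hconj]
    exact key (fun g => σ g) (continuous_subtype_val.comp (map_continuous σ))
      (fun x y => map_mul σ x y) hex
  · -- plain case : `c g = σ g⁻¹`
    have hex : ∃ h0 : G, σ h0⁻¹ ≠ π h0 := by
      by_contra hcon
      push_neg at hcon
      refine hne' (DFunLike.ext π σ⁻¹ fun x => ?_)
      have : (σ⁻¹ : PontryaginDual G) x = (σ x)⁻¹ := rfl
      rw [this, ← map_inv σ, ← hcon x]
    exact key (fun g => σ g⁻¹)
      (continuous_subtype_val.comp ((map_continuous σ).comp continuous_inv))
      (fun x y => by simp only [mul_inv, map_mul]) hex
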